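/- Let X be a normal space, Y a metric space, and Z₁,…,Z_k finitely many closed subsets of Y, each X-avoidable. Then their union Z₁ ∪ ⋯ ∪ Z_k is X-avoidable. -/
import Mathlib


/-- `Z` is `X`-avoidable: every continuous map `X → Y` admits, within any continuous
positive error function, a continuous perturbation whose image misses `Z`. -/
def Avoidable (X : Type) [TopologicalSpace X] {Y : Type} [MetricSpace Y] (Z : Set Y) : Prop :=
  ∀ f : X → Y, Continuous f → ∀ ε : X → ℝ, Continuous ε → (∀ x, 0 < ε x) →
    ∃ g : X → Y, Continuous g ∧ ∀ x, g x ∉ Z ∧ dist (f x) (g x) < ε x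

lemma avoid_union {X Y : Type} [TopologicalSpace X] [MetricSpace Y] {Z₁ Z₂ : Set Y}
    (h1c : IsClosed Z₁) (h1 : Avoidable X Z₁) (h2 : Avoidable X Z₂) :
    Avoidable X (Z₁ ∪ Z₂) := by
  rcases Z₁.eq_empty_or_nonempty with rfl | hne
  · intro f hf ε hε hεpos
    obtain ⟨g, hg, hgp⟩ := h2 f hf ε hε hεpos
    exact ⟨g, hg, fun x => ⟨by simpa using (hgp x).1, (hgp x).2⟩⟩
  intro f hf ε hε hεpos
  obtain ⟨g₁, hg₁, hg₁p⟩ := h1 f hf (fun x => ε x / 2) (hε.div_const 2)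
    (fun x => half_pos (hεpos x))
  set δ : X → ℝ := fun x => min (ε x / 2) (Metric.infDist (g₁ x) Z₁) with hδ
  have hδc : Continuous δ :=
    (hε.div_const 2).min ((Metric.continuous_infDist_pt Z₁).comp hg₁)
  have hδpos : ∀ x, 0 < δ x := by
    intro x
    refine lt_min (half_pos (hεpos x)) ?_
    rw [← h1c.notMem_iff_infDist_pos hne]
    exact (hg₁p x).1
  obtain ⟨g, hg, hgp⟩ := h2 g₁ hg₁ δ hδc hδpos
  refine ⟨g, hg, fun x => ⟨?_, ?_⟩⟩
  · rintro (hmem | hmem)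
    · have h := (hgp x).2
      have : Metric.infDist (g₁ x) Z₁ ≤ dist (g₁ x) (g x) := Metric.infDist_le_dist_of_mem hmem
      have : δ x ≤ dist (g₁ x) (g x) := le_trans (min_le_right _ _) this
      linarith
    · exact (hgp x).1 hmem
  · calc dist (f x) (g x) ≤ dist (f x) (g₁ x) + dist (g₁ x) (g x) := dist_triangle _ _ _
      _ < ε x / 2 + δ x := add_lt_add (hg₁p x).2 (hgp x).2
      _ ≤ ε x / 2 + ε x / 2 := by have := min_le_left (ε x / 2) (Metric.infDist (g₁ x) Z₁); linarith
      _ = ε x := by ring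

theorem stmt_6 (X : Type) [TopologicalSpace X] [NormalSpace X]
    (Y : Type) [MetricSpace Y] (k : ℕ) (Z : Fin k → Set Y)
    (hZc : ∀ i, IsClosed (Z i)) (hZ : ∀ i, Avoidable X (Z i)) :
    Avoidable X (⋃ i, Z i) := by
  induction k with
  | zero =>
    intro f hf ε hε hεpos
    exact ⟨f, hf, fun x => ⟨by simp, by simpa using hεpos x⟩⟩
  | succ n ih =>
    have hU : (⋃ i, Z i) = Z 0 ∪ ⋃ i : Fin n, Z i.succ := by
      ext y; simp [Set.mem_iUnion, Fin.exists_fin_succ]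
    rw [hU]
    exact avoid_union (hZc 0) (hZ 0)
      (ih (fun i => Z i.succ) (fun i => hZc i.succ) (fun i => hZ i.succ))
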